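/- arXiv:1203.1720 — 2 statements merged into one kernel-verified Lean document; each statement's English description precedes it below -/
import Mathlib

section
/- If a graded quotient S/I of a polynomial ring has the weak Lefschetz property, then its h-vector is unimodal: there is an index p such that h_0 ≤ h_1 ≤ ⋯ ≤ h_p ≥ h_{p+1} ≥ ⋯ ≥ h_s. Moreover, if h_p ≥ h_{p+1} for some p, then h_p ≥ h_{p+1} ≥ ⋯ ≥ h_s. -/
/- ### Graded commutative algebra over polynomial rings, following the paper's
definitions of l.s.o.p., Krull dimension, regular sequences, Cohen–Macaulayness,
the weak Lefschetz property, Hilbert series and `h`-vectors. -/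

section Ring

variable (𝕜 : Type*) [Field 𝕜] {σ : Type*} [Fintype σ] [DecidableEq σ]

open MvPolynomial

/-- The Stanley–Reisner ideal `I_Δ` of a complex `Δ` on the vertex set `σ`:
the ideal generated by the squarefree monomials `x_F` for non-faces `F`. -/
noncomputable def SRideal (Δ : Set (Finset σ)) : Ideal (MvPolynomial σ 𝕜) :=
  Ideal.span {m | ∃ F : Finset σ, F ∉ Δ ∧ m = ∏ v ∈ F, MvPolynomial.X v}

/-- `idealLE I m` is `I_{≤ m}`, the ideal generated by the elements of `I`
of degree at most `m`. -/
noncomputable def idealLE (I : Ideal (MvPolynomial σ 𝕜)) (m : ℕ) :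
    Ideal (MvPolynomial σ 𝕜) :=
  Ideal.span {f | f ∈ I ∧ f.totalDegree ≤ m}

/-- The degree-`i` graded piece of `S/I`: the image of the space of
homogeneous polynomials of degree `i` in the quotient. -/
noncomputable def quotPiece (I : Ideal (MvPolynomial σ 𝕜)) (i : ℕ) :
    Submodule 𝕜 ((MvPolynomial σ 𝕜) ⧸ I) :=
  Submodule.map (Ideal.Quotient.mkₐ 𝕜 I).toLinearMap
    (MvPolynomial.homogeneousSubmodule σ 𝕜 i)

/-- The Hilbert function of `S/I`. -/
noncomputable def hilb (I : Ideal (MvPolynomial σ 𝕜)) (i : ℕ) : ℕ :=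
  Module.finrank 𝕜 (quotPiece 𝕜 I i)

/-- `θ` is a linear system of parameters for `S/I`: a sequence of linear
forms such that `S/(I + (θ))` is a finite dimensional `𝕜`-vector space. -/
def IsLsop (I : Ideal (MvPolynomial σ 𝕜)) {m : ℕ}
    (θ : Fin m → MvPolynomial σ 𝕜) : Prop :=
  (∀ i, θ i ∈ MvPolynomial.homogeneousSubmodule σ 𝕜 1) ∧
    FiniteDimensional 𝕜
      ((MvPolynomial σ 𝕜) ⧸ (I ⊔ Ideal.span (Set.range θ)))

/-- The Krull dimension of `S/I`, defined (as in the paper) as the minimal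
length of a linear system of parameters. -/
noncomputable def ringDim (I : Ideal (MvPolynomial σ 𝕜)) : ℕ :=
  sInf {m | ∃ θ : Fin m → MvPolynomial σ 𝕜, IsLsop 𝕜 I θ}

/-- `θ` is a regular sequence on `S/I`: each `θ i` is a nonzerodivisor on
`S/(I + (θ_0, …, θ_{i-1}))`. -/
def IsRegSeq (I : Ideal (MvPolynomial σ 𝕜)) {m : ℕ}
    (θ : Fin m → MvPolynomial σ 𝕜) : Prop :=
  ∀ i : Fin m, ∀ g : MvPolynomial σ 𝕜,
    θ i * g ∈ I ⊔ Ideal.span (θ '' {j | j < i}) →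
      g ∈ I ⊔ Ideal.span (θ '' {j | j < i})

/-- `S/I` is Cohen–Macaulay of Krull dimension `d`: the dimension is `d`,
and every l.s.o.p. is a regular sequence. -/
def IsCMdim (I : Ideal (MvPolynomial σ 𝕜)) (d : ℕ) : Prop :=
  ringDim 𝕜 I = d ∧
  ∀ θ : Fin d → MvPolynomial σ 𝕜, IsLsop 𝕜 I θ → IsRegSeq 𝕜 I θ

/-- An Artinian quotient `S/I` has the weak Lefschetz property: there is a
linear form `w` such that multiplication `×w : (S/I)_m → (S/I)_{m+1}` is
injective or surjective for every `m`. -/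
def HasWLP0 (I : Ideal (MvPolynomial σ 𝕜)) : Prop :=
  ∃ w : MvPolynomial σ 𝕜, w ∈ MvPolynomial.homogeneousSubmodule σ 𝕜 1 ∧
    ∀ m : ℕ,
      (∀ f ∈ quotPiece 𝕜 I m, Ideal.Quotient.mk I w * f = 0 → f = 0) ∨
      (∀ g ∈ quotPiece 𝕜 I (m+1), ∃ f ∈ quotPiece 𝕜 I m,
        Ideal.Quotient.mk I w * f = g)

/-- `S/I` has the weak Lefschetz property (in dimension `d`): it is
Cohen–Macaulay of dimension `d` and there is an l.s.o.p. `Θ` such that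
`S/(I + (Θ))` has the (Artinian) weak Lefschetz property. -/
def HasWLP (I : Ideal (MvPolynomial σ 𝕜)) (d : ℕ) : Prop :=
  IsCMdim 𝕜 I d ∧
  ∃ θ : Fin d → MvPolynomial σ 𝕜, IsLsop 𝕜 I θ ∧
    HasWLP0 𝕜 (I ⊔ Ideal.span (Set.range θ))

/-- `(h 0, h 1, …)` is the `h`-vector of `S/I` (where `d = dim S/I`), i.e.
`H(S/I, t)·(1-t)^d = ∑ᵢ hᵢ tⁱ` as formal power series, expressed by
comparing coefficients. -/
def HasHVector (I : Ideal (MvPolynomial σ 𝕜)) (d : ℕ) (h : ℕ → ℤ) : Prop :=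
  ∀ m : ℕ, h m = ∑ j ∈ Finset.range (d + 1),
    if j ≤ m then (-1 : ℤ) ^ j * (d.choose j) * (hilb 𝕜 I (m - j)) else 0

/-- `I` is a homogeneous ideal. -/
def IsHomogIdeal (I : Ideal (MvPolynomial σ 𝕜)) : Prop :=
  ∀ f ∈ I, ∀ i : ℕ, MvPolynomial.homogeneousComponent i f ∈ I

end Ring


section AuxWLP
set_option linter.unusedSectionVars false
set_option synthInstance.maxHeartbeats 400000
variable {𝕜 : Type*} [Field 𝕜] {σ : Type*} [Fintype σ] [DecidableEq σ]
open MvPolynomial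

lemma mem_quotPiece_iff {J : Ideal (MvPolynomial σ 𝕜)} {i : ℕ} {x} :
    x ∈ quotPiece 𝕜 J i ↔
      ∃ f ∈ homogeneousSubmodule σ 𝕜 i, Ideal.Quotient.mk J f = x := by
  simp only [quotPiece, Submodule.mem_map, AlgHom.toLinearMap_apply,
    Ideal.Quotient.mkₐ_eq_mk, mem_homogeneousSubmodule]

lemma mul_piece {J : Ideal (MvPolynomial σ 𝕜)} {p : MvPolynomial σ 𝕜} {k i n : ℕ}
    (hp : p ∈ homogeneousSubmodule σ 𝕜 k) {x} (hx : x ∈ quotPiece 𝕜 J i)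
    (hn : k + i = n) :
    Ideal.Quotient.mk J p * x ∈ quotPiece 𝕜 J n := by
  obtain ⟨f, hf, rfl⟩ := mem_quotPiece_iff.mp hx
  exact mem_quotPiece_iff.mpr ⟨p * f, hn ▸ hp.mul hf, by simp [map_mul]⟩

set_option linter.unusedSectionVars false
set_option synthInstance.maxHeartbeats 400000

/-- Surjectivity of `×w` at degree `m` implies it at degree `m+1`. -/
lemma surj_step {J : Ideal (MvPolynomial σ 𝕜)} {w : MvPolynomial σ 𝕜}
    (hw : w ∈ homogeneousSubmodule σ 𝕜 1) {m : ℕ}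
    (h : ∀ g ∈ quotPiece 𝕜 J (m + 1), ∃ f ∈ quotPiece 𝕜 J m,
      Ideal.Quotient.mk J w * f = g) :
    ∀ g ∈ quotPiece 𝕜 J (m + 2), ∃ f ∈ quotPiece 𝕜 J (m + 1),
      Ideal.Quotient.mk J w * f = g := by
  intro g hg
  obtain ⟨f, hf, rfl⟩ := mem_quotPiece_iff.mp hg
  suffices hT : Ideal.Quotient.mk J f ∈
      Submodule.map (LinearMap.mulLeft 𝕜 (Ideal.Quotient.mk J w))
        (quotPiece 𝕜 J (m + 1)) by
    obtain ⟨e, he, hef⟩ := hT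
    exact ⟨e, he, hef⟩
  rw [f.as_sum, map_sum (Ideal.Quotient.mk J : MvPolynomial σ 𝕜 →+* MvPolynomial σ 𝕜 ⧸ J)]
  apply Submodule.sum_mem
  intro u hu
  have hcoeff : coeff u f ≠ 0 := MvPolynomial.mem_support_iff.mp hu
  have hudeg : u.degree = m + 2 := by
    rw [Finsupp.degree_eq_weight_one]
    exact hf hcoeff
  have hu0 : u ≠ 0 := by
    intro h0; rw [h0, map_zero] at hudeg; omega
  obtain ⟨i, hi⟩ : ∃ i, u i ≠ 0 := by
    by_contra hc; push_neg at hc; exact hu0 (Finsupp.ext fun j => hc j)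
  set v := u - Finsupp.single i 1 with hv
  have huv : Finsupp.single i 1 + v = u := by
    ext j
    simp only [hv, Finsupp.add_apply, Finsupp.tsub_apply, Finsupp.single_apply]
    rcases eq_or_ne i j with hij | hij
    · subst hij; simp; omega
    · simp [hij]
  have hvdeg : v.degree = m + 1 := by
    have h1 : (Finsupp.single i 1 + v).degree = m + 2 := by rw [huv]; exact hudeg
    rw [Finsupp.degree_eq_weight_one] at h1 ⊢
    rw [map_add] at h1
    have : (Finsupp.weight (fun _ : σ => (1:ℕ))) (Finsupp.single i (1:ℕ)) = 1 := by
      simp [Finsupp.weight_apply, Finsupp.sum_single_index]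
    omega
  have hmon : (monomial u (coeff u f) : MvPolynomial σ 𝕜)
      = X i * monomial v (coeff u f) := by
    rw [← huv, monomial_single_add, pow_one]
  obtain ⟨e, he, hee⟩ := h (Ideal.Quotient.mk J (monomial v (coeff u f)))
    (mem_quotPiece_iff.mpr ⟨_, isHomogeneous_monomial _ hvdeg, rfl⟩)
  refine ⟨Ideal.Quotient.mk J (X i) * e,
    mul_piece (isHomogeneous_X 𝕜 i) he (by omega), ?_⟩
  rw [LinearMap.mulLeft_apply, hmon, map_mul, ← hee]
  ring


section FD
variable {J : Ideal (MvPolynomial σ 𝕜)} [FiniteDimensional 𝕜 (MvPolynomial σ 𝕜 ⧸ J)]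

/-- Multiplication by `w` as a linear map between graded pieces. -/
noncomputable def resMul (w : MvPolynomial σ 𝕜)
    (hw : w ∈ homogeneousSubmodule σ 𝕜 1) (m : ℕ) :
    quotPiece 𝕜 J m →ₗ[𝕜] quotPiece 𝕜 J (m + 1) :=
  (LinearMap.mulLeft 𝕜 (Ideal.Quotient.mk J w)).restrict
    (fun x hx => mul_piece hw hx (by omega))

lemma resMul_inj {w : MvPolynomial σ 𝕜} (hw : w ∈ homogeneousSubmodule σ 𝕜 1)
    (m : ℕ)
    (hinj : ∀ f ∈ quotPiece 𝕜 J m, Ideal.Quotient.mk J w * f = 0 → f = 0) :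
    Function.Injective (resMul (J := J) w hw m) := by
  intro a b hab
  have h0 : Ideal.Quotient.mk J w * (a.1 - b.1) = 0 := by
    have h1 := congrArg Subtype.val hab
    simp only [resMul, LinearMap.restrict_coe_apply, LinearMap.mulLeft_apply] at h1
    rw [mul_sub]; exact sub_eq_zero.mpr h1
  exact Subtype.ext (sub_eq_zero.mp (hinj _ (sub_mem a.2 b.2) h0))

lemma hilb_le_of_inj {w : MvPolynomial σ 𝕜} (hw : w ∈ homogeneousSubmodule σ 𝕜 1)
    (m : ℕ)
    (hinj : ∀ f ∈ quotPiece 𝕜 J m, Ideal.Quotient.mk J w * f = 0 → f = 0) :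
    Module.finrank 𝕜 (quotPiece 𝕜 J m) ≤ Module.finrank 𝕜 (quotPiece 𝕜 J (m + 1)) :=
  LinearMap.finrank_le_finrank_of_injective (resMul_inj hw m hinj)

lemma surj_of_inj_of_le {w : MvPolynomial σ 𝕜}
    (hw : w ∈ homogeneousSubmodule σ 𝕜 1) {m : ℕ}
    (hinj : ∀ f ∈ quotPiece 𝕜 J m, Ideal.Quotient.mk J w * f = 0 → f = 0)
    (hle : Module.finrank 𝕜 (quotPiece 𝕜 J (m + 1)) ≤ Module.finrank 𝕜 (quotPiece 𝕜 J m)) :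
    ∀ g ∈ quotPiece 𝕜 J (m + 1), ∃ f ∈ quotPiece 𝕜 J m,
      Ideal.Quotient.mk J w * f = g := by
  have hinj' := resMul_inj hw m hinj
  have heq : Module.finrank 𝕜 (quotPiece 𝕜 J m)
      = Module.finrank 𝕜 (quotPiece 𝕜 J (m + 1)) :=
    le_antisymm (LinearMap.finrank_le_finrank_of_injective hinj') hle
  have hsurj : Function.Surjective (resMul (J := J) w hw m) :=
    (LinearMap.injective_iff_surjective_of_finrank_eq_finrank heq).mp hinj'
  intro g hg
  obtain ⟨x, hx⟩ := hsurj ⟨g, hg⟩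
  refine ⟨x.1, x.2, ?_⟩
  have h1 := congrArg Subtype.val hx
  exact h1

lemma hilb_le_of_surj {w : MvPolynomial σ 𝕜} {m : ℕ}
    (hs : ∀ g ∈ quotPiece 𝕜 J (m + 1), ∃ f ∈ quotPiece 𝕜 J m,
      Ideal.Quotient.mk J w * f = g) :
    Module.finrank 𝕜 (quotPiece 𝕜 J (m + 1)) ≤ Module.finrank 𝕜 (quotPiece 𝕜 J m) := by
  have hle : quotPiece 𝕜 J (m + 1) ≤
      Submodule.map (LinearMap.mulLeft 𝕜 (Ideal.Quotient.mk J w)) (quotPiece 𝕜 J m) := by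
    intro x hx
    obtain ⟨f, hf, hfx⟩ := hs x hx
    exact ⟨f, hf, by simpa only [LinearMap.mulLeft_apply] using hfx⟩
  calc Module.finrank 𝕜 (quotPiece 𝕜 J (m + 1))
      ≤ Module.finrank 𝕜 (Submodule.map (LinearMap.mulLeft 𝕜 (Ideal.Quotient.mk J w))
          (quotPiece 𝕜 J m)) := Submodule.finrank_mono hle
    _ ≤ Module.finrank 𝕜 (quotPiece 𝕜 J m) := Submodule.finrank_map_le _ _

lemma surj_of_le {w : MvPolynomial σ 𝕜} (hw : w ∈ homogeneousSubmodule σ 𝕜 1)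
    (hWLP : ∀ m : ℕ,
      (∀ f ∈ quotPiece 𝕜 J m, Ideal.Quotient.mk J w * f = 0 → f = 0) ∨
      (∀ g ∈ quotPiece 𝕜 J (m + 1), ∃ f ∈ quotPiece 𝕜 J m,
        Ideal.Quotient.mk J w * f = g))
    {m : ℕ}
    (hle : Module.finrank 𝕜 (quotPiece 𝕜 J (m + 1)) ≤ Module.finrank 𝕜 (quotPiece 𝕜 J m)) :
    ∀ g ∈ quotPiece 𝕜 J (m + 2), ∃ f ∈ quotPiece 𝕜 J (m + 1),
      Ideal.Quotient.mk J w * f = g := by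
  rcases hWLP m with hi | hs
  · exact surj_step hw (surj_of_inj_of_le hw hi hle)
  · exact surj_step hw hs

end FD
end AuxWLP

/-- If a graded quotient `S/I` of a polynomial ring has the
weak Lefschetz property, then its `h`-vector is unimodal; moreover if
`h_p ≥ h_{p+1}` for some `p`, then `h_p ≥ h_{p+1} ≥ ⋯ ≥ h_s`. Here, `S/I`
being Cohen–Macaulay with l.s.o.p. `Θ` and Artinian reduction
`R = S/(I + (Θ))`, the `h`-vector is given by `h_k = dim_𝕜 R_k`. -/
theorem hVector_unimodal_of_WLP
    (𝕜 : Type*) [Field 𝕜] {σ : Type*} [Fintype σ] [DecidableEq σ]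
    (I : Ideal (MvPolynomial σ 𝕜)) (hhom : IsHomogIdeal 𝕜 I)
    (d : ℕ) (hCM : IsCMdim 𝕜 I d)
    (θ : Fin d → MvPolynomial σ 𝕜) (hθ : IsLsop 𝕜 I θ)
    (hW : HasWLP0 𝕜 (I ⊔ Ideal.span (Set.range θ))) :
    (∃ p : ℕ,
      (∀ i < p, hilb 𝕜 (I ⊔ Ideal.span (Set.range θ)) i ≤
        hilb 𝕜 (I ⊔ Ideal.span (Set.range θ)) (i + 1)) ∧
      (∀ i, p ≤ i → hilb 𝕜 (I ⊔ Ideal.span (Set.range θ)) (i + 1) ≤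
        hilb 𝕜 (I ⊔ Ideal.span (Set.range θ)) i)) ∧
    (∀ p : ℕ, hilb 𝕜 (I ⊔ Ideal.span (Set.range θ)) (p + 1) ≤
        hilb 𝕜 (I ⊔ Ideal.span (Set.range θ)) p →
      ∀ q, p ≤ q → hilb 𝕜 (I ⊔ Ideal.span (Set.range θ)) (q + 1) ≤
        hilb 𝕜 (I ⊔ Ideal.span (Set.range θ)) q) := by
  classical
  haveI : FiniteDimensional 𝕜
      (MvPolynomial σ 𝕜 ⧸ (I ⊔ Ideal.span (Set.range θ))) := hθ.2
  set J := I ⊔ Ideal.span (Set.range θ) with hJ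
  obtain ⟨w, hw, hWLP⟩ := hW
  have key : ∀ p : ℕ, hilb 𝕜 J (p + 1) ≤ hilb 𝕜 J p →
      ∀ q, p ≤ q → hilb 𝕜 J (q + 1) ≤ hilb 𝕜 J q := by
    intro p hp q hq
    induction q, hq using Nat.le_induction with
    | base => exact hp
    | succ q hq ih =>
      exact hilb_le_of_surj (surj_of_le hw hWLP ih)
  refine ⟨?_, key⟩
  have hne : ∃ m, hilb 𝕜 J (m + 1) ≤ hilb 𝕜 J m := by
    by_contra hc
    push_neg at hc
    have hmono : StrictMono (fun m => hilb 𝕜 J m) := strictMono_nat_of_lt_succ hc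
    have h1 := hmono.le_apply (x := Module.finrank 𝕜 (MvPolynomial σ 𝕜 ⧸ J) + 1)
    have h2 : hilb 𝕜 J (Module.finrank 𝕜 (MvPolynomial σ 𝕜 ⧸ J) + 1)
        ≤ Module.finrank 𝕜 (MvPolynomial σ 𝕜 ⧸ J) := Submodule.finrank_le _
    omega
  refine ⟨Nat.find hne, fun i hi => ?_, fun i hi => key _ (Nat.find_spec hne) i hi⟩
  exact le_of_lt (lt_of_not_ge (Nat.find_min hne hi))
end

section
/- Let Δ be a homology (d−1)-sphere over k on vertex set [n], let 1 ≤ r ≤ (d+1)/2, let Δ' be an (r−1)-stacked homology d-ball with ∂Δ' = Δ, and let S = Δ' ∪ ({v} ∗ Δ) be the homology d-sphere obtained by coning the boundary with a new vertex v. Then for any subset F of [n] of cardinality k+1 with k > d−r all of whose proper subsets are faces of Δ', the induced subcomplex S|_{V−F} satisfies H̃_{d−k}(S|_{V−F}; k) = 0. -/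
open Finset

variable {V : Type*} [DecidableEq V] [Fintype V]

/-- A (possibly empty) simplicial complex on the vertex set `V`,
given as its set of faces: a collection of finite subsets of `V`
closed under taking subsets. -/
def IsComplex (Δ : Set (Finset V)) : Prop :=
  ∀ F ∈ Δ, ∀ G ⊆ F, G ∈ Δ

/-- `skc Δ i` is the complex `Δ(i) = {F ⊆ V : skelᵢ(2^F) ⊆ Δ}`:
all subsets `F` of `V` all of whose subsets of cardinality at most `i+1`
are faces of `Δ`. -/
def skc (Δ : Set (Finset V)) (i : ℕ) : Set (Finset V) :=
  {F | ∀ G ⊆ F, G.card ≤ i + 1 → G ∈ Δ}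

/-- The `k`-skeleton of a complex: faces of cardinality at most `k+1`. -/
def skel (Δ : Set (Finset V)) (k : ℕ) : Set (Finset V) :=
  {F ∈ Δ | F.card ≤ k + 1}

/-- A missing face of `Δ`: a non-face all of whose proper subsets are faces. -/
def IsMissingFace (Δ : Set (Finset V)) (F : Finset V) : Prop :=
  F ∉ Δ ∧ ∀ G ⊂ F, G ∈ Δ

/-- The link of a face. -/
def link (Δ : Set (Finset V)) (F : Finset V) : Set (Finset V) :=
  {G | Disjoint F G ∧ F ∪ G ∈ Δ}

/-- `numFacesCard Δ j` is `f_{j-1}(Δ)`, the number of faces of `Δ` of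
cardinality `j`. -/
noncomputable def numFacesCard (Δ : Set (Finset V)) (j : ℕ) : ℕ :=
  {F : Finset V | F ∈ Δ ∧ F.card = j}.ncard

/-- The `h`-numbers of a `(d-1)`-dimensional complex:
`h_i = ∑_{j=0}^{i} (-1)^{i-j} C(d-j, i-j) f_{j-1}`. -/
noncomputable def hVec (Δ : Set (Finset V)) (d i : ℕ) : ℤ :=
  ∑ j ∈ Finset.range (i + 1),
    (-1 : ℤ) ^ (i - j) * ((d - j).choose (i - j)) * (numFacesCard Δ j)

/- ### Reduced simplicial homology over a field -/

section Homology

variable (𝕜 : Type*) [Field 𝕜] [LinearOrder V]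

/-- Simplicial chains supported on a given set of finite subsets of `V`. -/
def chainsOn (A : Set (Finset V)) : Submodule 𝕜 (Finset V → 𝕜) where
  carrier := {f | ∀ G, f G ≠ 0 → G ∈ A}
  zero_mem' := by intro G hG; simp at hG
  add_mem' := by
    intro f g hf hg G hG
    by_cases h : f G = 0
    · exact hg G (by simpa [h] using hG)
    · exact hf G h
  smul_mem' := by
    intro c f hf G hG
    exact hf G (by intro h; simp [h] at hG)

/-- The boundary operator of the (augmented) simplicial chain complex on the
full simplex on `V`: `∂(e_F) = ∑_{v ∈ F} (-1)^{pos of v in F} e_{F \ v}`,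
written in the dual form `(∂ f) G = ∑_{v ∉ G} (-1)^{#{u ∈ G : u < v}} f (G ∪ {v})`.
The augmentation is included (singletons map onto the empty-set generator),
so the homology computed below is reduced homology. -/
noncomputable def bdryMap : (Finset V → 𝕜) →ₗ[𝕜] (Finset V → 𝕜) where
  toFun f := fun G => ∑ v ∈ Gᶜ,
    ((-1 : 𝕜) ^ ((G.filter (fun u => u < v)).card)) * f (insert v G)
  map_add' f g := by
    funext G
    simp [mul_add, Finset.sum_add_distrib]
  map_smul' c f := by
    funext G
    simp [Finset.mul_sum]
    congr 1; funext v; ring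

/-- Reduced cycles of `Δ` in cardinality `c` (i.e. dimension `c-1`). -/
noncomputable def redCycles (Δ : Set (Finset V)) (c : ℕ) :
    Submodule 𝕜 (Finset V → 𝕜) :=
  (chainsOn 𝕜 {F | F ∈ Δ ∧ F.card = c}) ⊓ LinearMap.ker (bdryMap 𝕜)

/-- Reduced boundaries of `Δ` in cardinality `c`. -/
noncomputable def redBdries (Δ : Set (Finset V)) (c : ℕ) :
    Submodule 𝕜 (Finset V → 𝕜) :=
  Submodule.map (bdryMap 𝕜) (chainsOn 𝕜 {F | F ∈ Δ ∧ F.card = c + 1})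

/-- `redH 𝕜 Δ c` is the reduced simplicial homology `H̃_{c-1}(Δ; 𝕜)`
(indexed by the cardinality `c` of faces rather than the dimension `c-1`). -/
noncomputable def redH (Δ : Set (Finset V)) (c : ℕ) : Type _ :=
  ↥(redCycles 𝕜 Δ c) ⧸
    Submodule.comap (redCycles 𝕜 Δ c).subtype (redBdries 𝕜 Δ c)

noncomputable instance (Δ : Set (Finset V)) (c : ℕ) :
    AddCommGroup (redH 𝕜 Δ c) := by
  unfold redH; infer_instance

noncomputable instance (Δ : Set (Finset V)) (c : ℕ) :
    Module 𝕜 (redH 𝕜 Δ c) := by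
  unfold redH; infer_instance

/-- `Δ` is a homology `n`-sphere over `𝕜`: it is an `n`-dimensional complex
such that for every face `F` (including `∅`) the reduced homology of the
link of `F` is that of a sphere of dimension `n - #F`, i.e.
`H̃_{c-1}(lk F) = 𝕜` if `c = n + 1 - #F` and `0` otherwise. -/
def IsHomologySphere (Δ : Set (Finset V)) (n : ℕ) : Prop :=
  IsComplex Δ ∧ (∀ F ∈ Δ, F.card ≤ n + 1) ∧ (∃ F ∈ Δ, F.card = n + 1) ∧
  ∀ F ∈ Δ, ∀ c : ℕ,
    Module.finrank 𝕜 (redH 𝕜 (link Δ F) c) =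
      if c + F.card = n + 1 then 1 else 0

/-- The boundary faces of a `d`-dimensional homology ball:
those faces `F` whose link has vanishing top reduced homology. -/
def bdryFaces (Δ : Set (Finset V)) (d : ℕ) : Set (Finset V) :=
  {F | F ∈ Δ ∧
    Module.finrank 𝕜 (redH 𝕜 (link Δ F) (d + 1 - F.card)) = 0}

/-- `Δ` is a homology `d`-ball over `𝕜`: a `d`-dimensional complex all of
whose links have reduced homology vanishing except possibly in the top
dimension `d - #F`, where it is `𝕜` or `0`, and whose boundary complex is
a homology `(d-1)`-sphere. -/
def IsHomologyBall (Δ : Set (Finset V)) (d : ℕ) : Prop :=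
  IsComplex Δ ∧ (∀ F ∈ Δ, F.card ≤ d + 1) ∧ (∃ F ∈ Δ, F.card = d + 1) ∧
  (∀ F ∈ Δ, ∀ c : ℕ,
    (c + F.card = d + 1 → Module.finrank 𝕜 (redH 𝕜 (link Δ F) c) ≤ 1) ∧
    (c + F.card ≠ d + 1 → Module.finrank 𝕜 (redH 𝕜 (link Δ F) c) = 0)) ∧
  IsHomologySphere 𝕜 (bdryFaces 𝕜 Δ d) (d - 1)

/-- A homology `d`-ball is `(r-1)`-stacked if it has no interior faces of
dimension at most `d - r`, i.e. every interior face has cardinality at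
least `d - r + 2`. -/
def IsStackedBall (Δ : Set (Finset V)) (d r : ℕ) : Prop :=
  IsHomologyBall 𝕜 Δ d ∧
  ∀ F ∈ Δ, F ∉ bdryFaces 𝕜 Δ d → d - r + 2 ≤ F.card

end Homology

/-- The cone `{v} ∗ Δ` over a complex `Δ` with apex `v`. -/
def coneOver {V : Type*} [DecidableEq V] (v : V) (Δ : Set (Finset V)) :
    Set (Finset V) :=
  Δ ∪ ((insert v) '' Δ)


section Aux

lemma bdryMap_apply {V : Type*} [Fintype V] [LinearOrder V] (𝕜 : Type*) [Field 𝕜]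
    (f : Finset V → 𝕜) (G : Finset V) :
    bdryMap 𝕜 f G = ∑ w ∈ Gᶜ,
      ((-1 : 𝕜) ^ ((G.filter (fun u => u < w)).card)) * f (insert w G) := rfl

lemma cone_homotopy {V : Type*} [Fintype V] [LinearOrder V] (𝕜 : Type*) [Field 𝕜]
    (v : V) (z : Finset V → 𝕜) (hz : bdryMap 𝕜 z = 0) :
    bdryMap 𝕜 (fun G => if v ∈ G then
      (-1 : 𝕜) ^ (((G.erase v).filter (fun u => u < v)).card) * z (G.erase v) else 0) = z := by
  funext G
  rw [bdryMap_apply]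
  by_cases hvG : v ∈ G
  · have hvA : v ∉ G.erase v := Finset.notMem_erase v G
    have hins : insert v (G.erase v) = G := Finset.insert_erase hvG
    have hvGc : v ∉ Gᶜ := by simp [hvG]
    have h0 : ∑ w ∈ (G.erase v)ᶜ,
        (-1 : 𝕜) ^ (((G.erase v).filter (fun u => u < w)).card) * z (insert w (G.erase v)) = 0 := by
      have := congrFun hz (G.erase v)
      rwa [bdryMap_apply] at this
      
    rw [Finset.compl_erase, Finset.sum_insert hvGc, hins] at h0
    have hsum : ∑ w ∈ Gᶜ,
        (-1 : 𝕜) ^ (((G.erase v).filter (fun u => u < w)).card) * z (insert w (G.erase v))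
        = -((-1 : 𝕜) ^ (((G.erase v).filter (fun u => u < v)).card) * z G) :=
      eq_neg_of_add_eq_zero_right h0
    have key : ∀ w ∈ Gᶜ, ((-1 : 𝕜) ^ ((G.filter (fun u => u < w)).card)) *
        (if v ∈ insert w G then
          (-1 : 𝕜) ^ ((((insert w G).erase v).filter (fun u => u < v)).card) *
            z ((insert w G).erase v) else 0)
        = -((-1 : 𝕜) ^ (((G.erase v).filter (fun u => u < v)).card) *
            ((-1 : 𝕜) ^ (((G.erase v).filter (fun u => u < w)).card) * z (insert w (G.erase v)))) := by
      intro w hw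
      have hwG : w ∉ G := by simpa using hw
      have hwv : w ≠ v := fun h => hwG (h ▸ hvG)
      have hwA : w ∉ G.erase v := fun h => hwG (Finset.erase_subset _ _ h)
      rw [if_pos (Finset.mem_insert_of_mem hvG), Finset.erase_insert_of_ne hwv]
      have e1 : (G.filter (fun u => u < w)).card =
          ((G.erase v).filter (fun u => u < w)).card + (if v < w then 1 else 0) := by
        conv_lhs => rw [← hins]
        rw [Finset.filter_insert]
        split <;> simp_all [Finset.card_insert_of_notMem, Finset.mem_filter]
      have e2 : (((insert w (G.erase v))).filter (fun u => u < v)).card =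
          ((G.erase v).filter (fun u => u < v)).card + (if w < v then 1 else 0) := by
        rw [Finset.filter_insert]
        split <;> simp_all [Finset.card_insert_of_notMem, Finset.mem_filter]
      rw [e1, e2]
      rcases lt_or_gt_of_ne hwv with h | h
      · rw [if_pos h, if_neg (not_lt.mpr h.le)]
        ring_nf
      · rw [if_neg (not_lt.mpr h.le), if_pos h]
        ring_nf
    rw [Finset.sum_congr rfl key, Finset.sum_neg_distrib, ← Finset.mul_sum, hsum]
    have : ((-1 : 𝕜) ^ (((G.erase v).filter (fun u => u < v)).card)) *
        ((-1 : 𝕜) ^ (((G.erase v).filter (fun u => u < v)).card)) = 1 := by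
      rw [← pow_add]
      exact Even.neg_one_pow ⟨_, rfl⟩
    rw [mul_neg, neg_neg, ← mul_assoc, this, one_mul]
  · rw [Finset.sum_eq_single_of_mem v (by simpa using hvG)]
    · rw [if_pos (Finset.mem_insert_self v G), Finset.erase_insert hvG,
        ← mul_assoc, ← pow_add, Even.neg_one_pow ⟨_, rfl⟩, one_mul]
    · intro w _ hwv
      rw [if_neg (by simp [hvG, Ne.symm hwv]), mul_zero]

end Aux

/-- Let `Δ` be a homology `(d-1)`-sphere over `𝕜`, let
`1 ≤ r ≤ (d+1)/2`, let `Δ'` be an `(r-1)`-stacked homology `d`-ball with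
`∂Δ' = Δ`, and let `S = Δ' ∪ ({v} ∗ Δ)` be the homology `d`-sphere obtained
by coning the boundary with a new vertex `v`. Then for any subset `F` of the
vertex set of `Δ'` of cardinality `m+1` with `m > d-r`, all of whose proper
subsets are faces of `Δ'`, the induced subcomplex `S|_{V∖F}` satisfies
`H̃_{d-m}(S|_{V∖F}; 𝕜) = 0`. -/
theorem induced_subcomplex_homology_vanishes
    {V : Type*} [Fintype V] [LinearOrder V] (𝕜 : Type*) [Field 𝕜]
    (Δ Δ' : Set (Finset V)) (d r m : ℕ) (v : V)
    (hr1 : 1 ≤ r) (hr2 : 2 * r ≤ d + 1)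
    (hsphere : IsHomologySphere 𝕜 Δ (d - 1))
    (hstacked : IsStackedBall 𝕜 Δ' d r)
    (hbdry : bdryFaces 𝕜 Δ' d = Δ)
    (hv : ∀ G ∈ Δ', v ∉ G)  -- `v` is a new vertex
    (F : Finset V) (hvF : v ∉ F) (hF : F.card = m + 1) (hm : d - r < m)
    (hproper : ∀ G ⊂ F, G ∈ Δ') :
    Module.finrank 𝕜
      (redH 𝕜 {G | G ∈ (Δ' ∪ coneOver v Δ) ∧ Disjoint G F} (d + 1 - m)) = 0 := by
  classical
  set c := d + 1 - m with hc
  set SW : Set (Finset V) := {G | G ∈ (Δ' ∪ coneOver v Δ) ∧ Disjoint G F} with hSW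
  have hcle : c ≤ d - r + 1 := by omega
  have key : Submodule.comap (redCycles 𝕜 SW c).subtype (redBdries 𝕜 SW c) = ⊤ := by
    rw [Submodule.comap_subtype_eq_top]
    intro z hzc
    have hz1 : ∀ G, z G ≠ 0 → G ∈ {H | H ∈ SW ∧ H.card = c} := hzc.1
    have hz2 : bdryMap 𝕜 z = 0 := hzc.2
    refine Submodule.mem_map.mpr ⟨(fun G => if v ∈ G then
      (-1 : 𝕜) ^ (((G.erase v).filter (fun u => u < v)).card) * z (G.erase v) else 0),
      ?_, cone_homotopy 𝕜 v z hz2⟩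
    intro G hG
    by_cases hvG : v ∈ G
    swap
    · simp [hvG] at hG
    simp only [hvG, if_true] at hG
    have hzA : z (G.erase v) ≠ 0 := right_ne_zero_of_mul hG
    obtain ⟨⟨hA1, hA2⟩, hAc⟩ := hz1 _ hzA
    have hAΔ : G.erase v ∈ Δ := by
      rcases hA1 with h | h
      · by_contra hne
        have hni : G.erase v ∉ bdryFaces 𝕜 Δ' d := by rw [hbdry]; exact hne
        have := hstacked.2 _ h hni
        omega
      · rcases h with h | ⟨H, _, hHe⟩
        · exact h
        · exact absurd (hHe ▸ Finset.mem_insert_self v H) (Finset.notMem_erase v G)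
    refine ⟨⟨Or.inr (Or.inr ⟨G.erase v, hAΔ, Finset.insert_erase hvG⟩), ?_⟩, ?_⟩
    · rw [← Finset.insert_erase hvG]
      exact Finset.disjoint_insert_left.mpr ⟨hvF, hA2⟩
    · rw [← Finset.card_erase_add_one hvG, hAc]
  haveI hsub : Subsingleton (redH 𝕜 SW c) := by
    unfold redH
    exact Submodule.Quotient.subsingleton_iff.mpr key
  exact Module.finrank_zero_of_subsingleton
end
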